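/- Pruning lemma: let A and B be two partial online batching strategies on the first n jobs whose most recent batch boundary is at the same position p ≤ n, with r_A ≤ r_B batches used and cost_A(n) ≤ cost_B(n). Then for every extension (continuation of batching decisions) of B to n' > n jobs, applying the same continuation to A yields cost_A(n') ≤ cost_B(n'). -/
import Mathlib


/-- State after the first `j` jobs for the online algorithm given by decisions `d`
(`d j = true` means job `j ≥ 2` starts a new batch): `(current batch index,
position of the most recent batch boundary, cost of all closed batches)`. -/
def ocSt (d : ℕ → Bool) : ℕ → ℕ × ℕ × ℕ
  | 0 => (1, 0, 0)
  | j + 1 =>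
    let (r, s, a) := ocSt d j
    if j ≠ 0 ∧ d (j + 1) = true then (r + 1, j, a + (j - s) * (r + j)) else (r, s, a)

/-- Online cost of the first `n` jobs: cost of closed batches plus the cost of
the final (possibly open) batch, which completes at time `r + n`. -/
def onlineCost (d : ℕ → Bool) (n : ℕ) : ℕ :=
  let (r, s, a) := ocSt d n
  a + (n - s) * (r + n)

lemma ocSt_succ (d : ℕ → Bool) (j : ℕ) :
    ocSt d (j + 1) = if j ≠ 0 ∧ d (j + 1) = true then
      ((ocSt d j).1 + 1, j, (ocSt d j).2.2 + (j - (ocSt d j).2.1) * ((ocSt d j).1 + j))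
    else ocSt d j := by
  rw [ocSt]

lemma onlineCost_eq (d : ℕ → Bool) (n : ℕ) :
    onlineCost d n = (ocSt d n).2.2 + (n - (ocSt d n).2.1) * ((ocSt d n).1 + n) := by
  rw [onlineCost]

/-- Pruning lemma: if two partial strategies have the same most recent batch
boundary `p ≤ n`, `A` uses at most as many batches as `B`, and `A`'s cost is at
most `B`'s cost, then under any common continuation `A`'s cost stays at most
`B`'s cost. -/
theorem pruning_dominance (dA dB : ℕ → Bool) (n p : ℕ) (hpn : p ≤ n)
    (hsA : (ocSt dA n).2.1 = p) (hsB : (ocSt dB n).2.1 = p)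
    (hr : (ocSt dA n).1 ≤ (ocSt dB n).1)
    (hc : onlineCost dA n ≤ onlineCost dB n)
    (hcont : ∀ j : ℕ, n < j → dA j = dB j) :
    ∀ n' : ℕ, n ≤ n' → onlineCost dA n' ≤ onlineCost dB n' := by
  have key : ∀ n' : ℕ, n ≤ n' →
      (ocSt dA n').2.1 = (ocSt dB n').2.1 ∧ (ocSt dA n').2.1 ≤ n' ∧
      (ocSt dA n').1 ≤ (ocSt dB n').1 ∧ onlineCost dA n' ≤ onlineCost dB n' := by
    intro n' hn'
    induction n' , hn' using Nat.le_induction with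
    | base => exact ⟨hsA.trans hsB.symm, hsA ▸ hpn, hr, hc⟩
    | succ k hk ih =>
      obtain ⟨hs, hsk, hrk, hck⟩ := ih
      have hd : dA (k + 1) = dB (k + 1) := hcont _ (by omega)
      rw [onlineCost_eq] at hck
      rw [onlineCost_eq dB] at hck
      rw [onlineCost_eq, onlineCost_eq, ocSt_succ dA, ocSt_succ dB, hd, hs]
      by_cases h : k ≠ 0 ∧ dB (k + 1) = true
      · rw [if_pos h, if_pos h]
        rw [hs] at hck
        refine ⟨rfl, Nat.le_succ k, Nat.succ_le_succ hrk, ?_⟩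
        simp only [Nat.add_sub_cancel_left, one_mul]
        linarith [hck, hrk]
      · rw [if_neg h, if_neg h]
        rw [hs] at hck ⊢
        set rA := (ocSt dA k).1; set rB := (ocSt dB k).1
        set aA := (ocSt dA k).2.2; set aB := (ocSt dB k).2.2
        set s := (ocSt dB k).2.1 with hsdef
        refine ⟨rfl, by omega, hrk, ?_⟩
        have hsub : k + 1 - s = (k - s) + 1 := by omega
        rw [hsub]
        set t := k - s
        have eA : (t + 1) * (rA + (k + 1)) = t * (rA + k) + t + rA + k + 1 := by ring
        have eB : (t + 1) * (rB + (k + 1)) = t * (rB + k) + t + rB + k + 1 := by ring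
        omega
  intro n' hn'
  exact (key n' hn').2.2.2
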